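/- Let f be univalent on a neighborhood of the closure of a square S, with distortion bound D = max_{z,z'∈cl(S)} |f'(z)|/|f'(z')|. Let Γ₁ be a disk of diameter 1 and Γ₂ its concentric disk of diameter 1/2. If f(S) intersects both Γ₂ and the complement of Γ₁, then Γ₁ ∩ f(S) contains a disk of diameter at least 1/(20·D²). -/

import Mathlib

open Metric

open Set Filter Function Topology

/-- An open axis-parallel square in ℂ with center `w` and side length `s`. -/
def openSquare (w : ℂ) (s : ℝ) : Set ℂ :=
  {z : ℂ | |(z - w).re| < s/2 ∧ |(z - w).im| < s/2}

noncomputable section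

lemma analyticStrict {U : Set ℂ} (hU : IsOpen U) {f : ℂ → ℂ}
    (hf : DifferentiableOn ℂ f U) {z : ℂ} (hz : z ∈ U) :
    HasStrictDerivAt f (deriv f z) z := by
  obtain ⟨p, hp⟩ := (hf.analyticOnNhd hU) z hz
  rw [hp.deriv]
  exact hp.hasStrictDerivAt

lemma key_ball {U : Set ℂ} (hU : IsOpen U) {f : ℂ → ℂ}
    (hf : DifferentiableOn ℂ f U) (hinj : Set.InjOn f U)
    {c : ℂ} {ρ : ℝ} (hρ : 0 < ρ) (hK : closedBall c ρ ⊆ U)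
    {b : ℝ} (hb : 0 < b) (hlow : ∀ z ∈ closedBall c ρ, b ≤ ‖deriv f z‖) :
    ball (f c) (b * ρ) ⊆ f '' ball c ρ := by
  have hBK : ball c ρ ⊆ closedBall c ρ := ball_subset_closedBall
  have hBU : ball c ρ ⊆ U := hBK.trans hK
  have hne0 : ∀ z ∈ closedBall c ρ, deriv f z ≠ 0 := by
    intro z hz h
    have := hlow z hz
    rw [h, norm_zero] at this
    linarith
  have hstrict : ∀ z ∈ U, HasStrictDerivAt f (deriv f z) z :=
    fun z hz => analyticStrict hU hf hz
  have hopen : IsOpen (f '' ball c ρ) := by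
    rw [isOpen_iff_mem_nhds]
    rintro y ⟨z, hz, rfl⟩
    rw [← (hstrict z (hBU hz)).map_nhds_eq (hne0 z (hBK hz))]
    exact Filter.image_mem_map (isOpen_ball.mem_nhds hz)
  have hfc : f c ∈ f '' ball c ρ := ⟨c, mem_ball_self hρ, rfl⟩
  have hKcpt : IsCompact (closedBall c ρ) := isCompact_closedBall c ρ
  have hfKcpt : IsCompact (f '' closedBall c ρ) :=
    hKcpt.image_of_continuousOn (hf.continuousOn.mono hK)
  have hcompl_ne : (f '' ball c ρ)ᶜ.Nonempty := by
    rw [nonempty_compl]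
    intro h
    exact hfKcpt.ne_univ (univ_subset_iff.1 (h ▸ image_mono hBK))
  set R := infDist (f c) (f '' ball c ρ)ᶜ with hR
  have hball_sub : ball (f c) R ⊆ f '' ball c ρ := ball_infDist_compl_subset
  obtain ⟨w₁, hw₁c, hw₁d⟩ := hopen.isClosed_compl.exists_infDist_eq_dist hcompl_ne (f c)
  have hRw : ‖w₁ - f c‖ = R := by
    rw [← dist_eq_norm, dist_comm]; exact hw₁d.symm
  have hRnonneg : 0 ≤ R := infDist_nonneg
  have hRpos : 0 < R := by
    rcases hRnonneg.lt_or_eq with h | h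
    · exact h
    · exfalso
      apply hw₁c
      have h0 : dist (f c) w₁ = 0 := by rw [← hw₁d]; exact h.symm
      rw [dist_eq_zero] at h0
      rw [← h0]; exact hfc
  set v := w₁ - f c with hv
  set γ : ℝ → ℂ := fun t => f c + t • v with hγ
  have hγcont : Continuous γ := by
    exact continuous_const.add (continuous_id.smul continuous_const)
  have hγmem : ∀ t ∈ Ico (0:ℝ) 1, γ t ∈ f '' ball c ρ := by
    intro t ht
    apply hball_sub
    rw [mem_ball, dist_eq_norm]
    have e : γ t - f c = t • v := by simp [hγ]
    rw [e, norm_smul, Real.norm_eq_abs, abs_of_nonneg ht.1, hRw]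
    calc t * R < 1 * R := by exact mul_lt_mul_of_pos_right ht.2 hRpos
    _ = R := one_mul R
  set K := closedBall c ρ with hKdef
  set ψ : ℝ → ℂ := fun t => Function.invFunOn f K (γ t) with hψdef
  have hψ : ∀ t ∈ Ico (0:ℝ) 1, ψ t ∈ ball c ρ ∧ f (ψ t) = γ t := by
    intro t ht
    obtain ⟨x, hxB, hfx⟩ := hγmem t ht
    have hex : ∃ a ∈ K, f a = γ t := ⟨x, hBK hxB, hfx⟩
    have h1 : ψ t ∈ K := Function.invFunOn_mem hex
    have h2 : f (ψ t) = γ t := Function.invFunOn_eq hex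
    have h3 : ψ t = x := hinj (hK h1) (hBU hxB) (by rw [h2, hfx])
    exact ⟨by rw [h3]; exact hxB, h2⟩
  have hγ0 : γ 0 = f c := by simp [hγ]
  have hψ0 : ψ 0 = c := by
    obtain ⟨h1, h2⟩ := hψ 0 ⟨le_refl 0, one_pos⟩
    exact hinj (hBU h1) (hK (mem_closedBall_self hρ.le)) (by rw [h2, hγ0])
  have hbound : ∀ T ∈ Ico (0:ℝ) 1, ‖ψ T - c‖ ≤ R * b⁻¹ := by
    intro T hT
    have hTsub : Icc (0:ℝ) T ⊆ Ico 0 1 := fun u hu => ⟨hu.1, lt_of_le_of_lt hu.2 hT.2⟩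
    have key : ∀ x ∈ Icc (0:ℝ) T,
        HasDerivWithinAt ψ (v • (deriv f (ψ x))⁻¹) (Icc 0 T) x := by
      intro x hx
      have hxI : x ∈ Ico (0:ℝ) 1 := hTsub hx
      obtain ⟨hzB, hfz⟩ := hψ x hxI
      have hzU : ψ x ∈ U := hBU hzB
      have hsz : HasStrictDerivAt f (deriv f (ψ x)) (ψ x) := hstrict _ hzU
      have hnz : deriv f (ψ x) ≠ 0 := hne0 _ (hBK hzB)
      set g : ℂ → ℂ := hsz.localInverse f (deriv f (ψ x)) (ψ x) hnz with hgdef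
      have hginv : HasStrictDerivAt g (deriv f (ψ x))⁻¹ (f (ψ x)) := hsz.to_localInverse hnz
      have hgright : ∀ᶠ y in 𝓝 (f (ψ x)), f (g y) = y :=
        (hsz.hasStrictFDerivAt_equiv hnz).eventually_right_inverse
      have hgz : g (f (ψ x)) = ψ x :=
        (hsz.hasStrictFDerivAt_equiv hnz).localInverse_apply_image
      have hgcont : ContinuousAt g (f (ψ x)) :=
        (hsz.hasStrictFDerivAt_equiv hnz).localInverse_continuousAt
      have hgU : ∀ᶠ y in 𝓝 (f (ψ x)), g y ∈ U := by
        have hUmem : U ∈ 𝓝 (g (f (ψ x))) := hU.mem_nhds (by rw [hgz]; exact hzU)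
        exact hgcont hUmem
      have hγder : HasDerivAt γ v x := by
        have h1 : HasDerivAt (fun t : ℝ => t • v) ((1:ℝ) • v) x := (hasDerivAt_id x).smul_const v
        have h2 := h1.const_add (f c)
        simpa [hγ] using h2
      have hcomp : HasDerivAt (g ∘ γ) (v • (deriv f (ψ x))⁻¹) x :=
        HasDerivAt.scomp_of_eq x hginv.hasDerivAt hγder hfz
      have hev : ∀ᶠ u in 𝓝 x, f (g (γ u)) = γ u ∧ g (γ u) ∈ U := by
        have h2 : Tendsto γ (𝓝 x) (𝓝 (f (ψ x))) := by
          rw [hfz]; exact hγcont.continuousAt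
        exact h2.eventually (hgright.and hgU)
      have heq : ψ =ᶠ[𝓝[Icc (0:ℝ) T] x] g ∘ γ := by
        filter_upwards [nhdsWithin_le_nhds hev, self_mem_nhdsWithin] with u hu huT
        obtain ⟨hfu, hguU⟩ := hu
        obtain ⟨hψuB, hfψu⟩ := hψ u (hTsub huT)
        exact hinj (hBU hψuB) hguU (by simp only [Function.comp_apply]; rw [hfψu, hfu])
      refine hcomp.hasDerivWithinAt.congr_of_eventuallyEq heq ?_
      show ψ x = g (γ x)
      rw [← hfz, hgz]
    have hnormbound : ∀ x ∈ Ico (0:ℝ) T, ‖v • (deriv f (ψ x))⁻¹‖ ≤ R * b⁻¹ := by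
      intro x hx
      have hxI : x ∈ Ico (0:ℝ) 1 := ⟨hx.1, hx.2.trans hT.2⟩
      obtain ⟨hzB, _⟩ := hψ x hxI
      rw [norm_smul, hRw, norm_inv]
      have h1 : b ≤ ‖deriv f (ψ x)‖ := hlow _ (hBK hzB)
      have h2 : ‖deriv f (ψ x)‖⁻¹ ≤ b⁻¹ := by
        apply inv_anti₀ hb h1
      exact mul_le_mul_of_nonneg_left h2 hRnonneg
    have h := norm_image_sub_le_of_norm_deriv_le_segment' key hnormbound T
      (right_mem_Icc.2 hT.1)
    rw [hψ0] at h
    have hC : 0 ≤ R * b⁻¹ := mul_nonneg hRnonneg (inv_nonneg.2 hb.le)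
    calc ‖ψ T - c‖ ≤ R * b⁻¹ * (T - 0) := h
    _ ≤ R * b⁻¹ * 1 := by nlinarith [hT.2.le, hT.1]
    _ = R * b⁻¹ := mul_one _
  set t : ℕ → ℝ := fun n => 1 - 1/((n:ℝ)+1) with htdef
  have htI : ∀ n, t n ∈ Ico (0:ℝ) 1 := by
    intro n
    constructor
    · have h1 : 1/((n:ℝ)+1) ≤ 1 := by
        rw [div_le_one (by positivity)]
        linarith [(Nat.cast_nonneg n : (0:ℝ) ≤ n)]
      simp only [htdef]; linarith
    · have h2 : 0 < 1/((n:ℝ)+1) := by positivity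
      simp only [htdef]; linarith
  have hseq : ∀ n : ℕ, ψ (t n) ∈ K := fun n => hBK (hψ _ (htI n)).1
  obtain ⟨z₁, hz₁K, φ, hφmono, hφtend⟩ := hKcpt.tendsto_subseq hseq
  have htt : Tendsto t atTop (𝓝 1) := by
    have h0 := tendsto_one_div_add_atTop_nhds_zero_nat (𝕜 := ℝ)
    have := (tendsto_const_nhds (x := (1:ℝ)) (f := atTop)).sub h0
    simpa [htdef] using this
  have httφ : Tendsto (fun n => t (φ n)) atTop (𝓝 1) := htt.comp hφmono.tendsto_atTop
  have hγ1 : γ 1 = w₁ := by simp [hγ, hv]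
  have hfz₁ : f z₁ = w₁ := by
    have hfc' : ContinuousAt f z₁ :=
      (hf.differentiableAt (hU.mem_nhds (hK hz₁K))).continuousAt
    have h1 : Tendsto (fun n => f (ψ (t (φ n)))) atTop (𝓝 (f z₁)) :=
      hfc'.tendsto.comp hφtend
    have h2 : Tendsto (fun n => f (ψ (t (φ n)))) atTop (𝓝 w₁) := by
      have heqf : ∀ n : ℕ, f (ψ (t (φ n))) = γ (t (φ n)) := fun n => (hψ _ (htI _)).2
      simp only [heqf]
      have h3 := (hγcont.tendsto 1).comp httφ
      rwa [hγ1] at h3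
    exact tendsto_nhds_unique h1 h2
  have hz₁notB : z₁ ∉ ball c ρ := fun h => hw₁c ⟨z₁, h, hfz₁⟩
  have hz₁far : ρ ≤ ‖z₁ - c‖ := by
    by_contra h
    push_neg at h
    exact hz₁notB (by rwa [mem_ball, dist_eq_norm])
  have hz₁close : ‖z₁ - c‖ ≤ R * b⁻¹ := by
    have hn : Tendsto (fun n => ‖ψ (t (φ n)) - c‖) atTop (𝓝 ‖z₁ - c‖) :=
      (hφtend.sub tendsto_const_nhds).norm
    exact le_of_tendsto hn (Eventually.of_forall fun n => hbound _ (htI _))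
  have hfinal : b * ρ ≤ R := by
    have h1 : ρ ≤ R * b⁻¹ := hz₁far.trans hz₁close
    have h2 : b * ρ ≤ b * (R * b⁻¹) := mul_le_mul_of_nonneg_left h1 hb.le
    have h3 : b * (R * b⁻¹) = R := by field_simp
    linarith
  exact (ball_subset_ball hfinal).trans hball_sub

set_option maxHeartbeats 2000000 in
/-- If `f` is univalent on a neighborhood of the closure of a square `S`, with distortion
bounded by `D` on `cl S`, and `f(S)` meets both the disk `Γ₂` of diameter `1/2` and the
complement of the concentric disk `Γ₁` of diameter `1`, then `Γ₁ ∩ f(S)` contains a disk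
of diameter at least `1/(20 D²)`. -/
theorem image_contains_disk_in_annulus (w : ℂ) (s : ℝ) (hs : 0 < s)
    (U : Set ℂ) (hU : IsOpen U) (hSU : closure (openSquare w s) ⊆ U)
    (f : ℂ → ℂ) (hf : DifferentiableOn ℂ f U) (hinj : Set.InjOn f U)
    (D : ℝ) (hD : 1 ≤ D)
    (hdist : ∀ z ∈ closure (openSquare w s), ∀ z' ∈ closure (openSquare w s),
      ‖deriv f z‖ ≤ D * ‖deriv f z'‖)
    (c₁ : ℂ)
    (h₂ : (f '' openSquare w s ∩ ball c₁ (1/4)).Nonempty)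
    (h₁ : (f '' openSquare w s \ ball c₁ (1/2)).Nonempty) :
    ∃ c₃ : ℂ, ball c₃ (1 / (40 * D^2)) ⊆ ball c₁ (1/2) ∩ f '' openSquare w s := by
  have hnorm_le : ∀ z : ℂ, ‖z‖ ≤ |z.re| + |z.im| := fun z => by
    exact Complex.norm_le_abs_re_add_abs_im z
  have habs_re : ∀ z : ℂ, |z.re| ≤ ‖z‖ := fun z => by
    exact Complex.abs_re_le_norm z
  have habs_im : ∀ z : ℂ, |z.im| ≤ ‖z‖ := fun z => by
    exact Complex.abs_im_le_norm z
  have hkey_abs : ∀ a b u v ww : ℝ, 0 ≤ a → 0 ≤ b → a + b = 1 →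
      |u - ww| < s/2 → |v - ww| < s/2 → |a*u + b*v - ww| < s/2 := by
    intro a b u v ww ha hb hab h1 h2
    have e : a*u + b*v - ww = a*(u-ww) + b*(v-ww) := by linear_combination ww * hab
    have hm : max |u-ww| |v-ww| < s/2 := max_lt h1 h2
    have hle : |a*(u-ww) + b*(v-ww)| ≤ max |u-ww| |v-ww| := by
      calc |a*(u-ww) + b*(v-ww)| ≤ |a*(u-ww)| + |b*(v-ww)| := abs_add_le _ _
      _ = a*|u-ww| + b*|v-ww| := by rw [abs_mul, abs_mul, abs_of_nonneg ha, abs_of_nonneg hb]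
      _ ≤ a * max |u-ww| |v-ww| + b * max |u-ww| |v-ww| :=
          add_le_add (mul_le_mul_of_nonneg_left (le_max_left _ _) ha)
            (mul_le_mul_of_nonneg_left (le_max_right _ _) hb)
      _ = max |u-ww| |v-ww| := by rw [← add_mul, hab, one_mul]
    rw [e]; exact lt_of_le_of_lt hle hm
  have hS_conv : Convex ℝ (openSquare w s) := by
    intro x hx y hy a b ha hb hab
    obtain ⟨hx1, hx2⟩ := hx
    obtain ⟨hy1, hy2⟩ := hy
    have hx1' : |x.re - w.re| < s/2 := by simpa [Complex.sub_re] using hx1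
    have hy1' : |y.re - w.re| < s/2 := by simpa [Complex.sub_re] using hy1
    have hx2' : |x.im - w.im| < s/2 := by simpa [Complex.sub_im] using hx2
    have hy2' : |y.im - w.im| < s/2 := by simpa [Complex.sub_im] using hy2
    refine ⟨?_, ?_⟩
    · have e : (a • x + b • y - w).re = a * x.re + b * y.re - w.re := by
        simp [Complex.add_re, Complex.sub_re, Complex.smul_re, smul_eq_mul]
      rw [e]
      exact hkey_abs a b x.re y.re w.re ha hb hab hx1' hy1'
    · have e : (a • x + b • y - w).im = a * x.im + b * y.im - w.im := by
        simp [Complex.add_im, Complex.sub_im, Complex.smul_im, smul_eq_mul]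
      rw [e]
      exact hkey_abs a b x.im y.im w.im ha hb hab hx2' hy2'
  have hS_sub : openSquare w s ⊆ closedBall w s := by
    intro z hz
    obtain ⟨h1, h2⟩ := hz
    rw [mem_closedBall, dist_eq_norm]
    have := hnorm_le (z - w)
    linarith
  have hcl_cpt : IsCompact (closure (openSquare w s)) :=
    (isCompact_closedBall w s).of_isClosed_subset isClosed_closure
      (closure_minimal hS_sub Metric.isClosed_closedBall)
  have hwS : w ∈ openSquare w s := by
    have h0 : (0:ℝ) < s/2 := by positivity
    exact ⟨by simpa using h0, by simpa using h0⟩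
  have han : AnalyticOnNhd ℂ f U := hf.analyticOnNhd hU
  have hdc : ContinuousOn (fun z => ‖deriv f z‖) (closure (openSquare w s)) :=
    ((han.deriv.continuousOn).mono hSU).norm
  obtain ⟨zM, hzM, hmax⟩ := hcl_cpt.exists_isMaxOn ⟨w, subset_closure hwS⟩ hdc
  set M := ‖deriv f zM‖ with hM
  have hMub : ∀ z ∈ closure (openSquare w s), ‖deriv f z‖ ≤ M := fun z hz => hmax hz
  obtain ⟨y₂, hy₂⟩ := h₂
  obtain ⟨⟨p, hpS, rfl⟩, hpball⟩ := hy₂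
  obtain ⟨y₁, hy₁⟩ := h₁
  obtain ⟨⟨q, hqS, rfl⟩, hqball⟩ := hy₁
  have hMVT : ∀ x ∈ openSquare w s, ∀ y ∈ openSquare w s, ‖f y - f x‖ ≤ M * ‖y - x‖ := by
    intro x hx y hy
    exact Convex.norm_image_sub_le_of_norm_deriv_le (𝕜 := ℂ)
      (fun z hz => hf.differentiableAt (hU.mem_nhds (hSU (subset_closure hz))))
      (fun z hz => hMub z (subset_closure hz)) hS_conv hx hy
  have hpd : dist (f p) c₁ < 1/4 := hpball
  have hqd : 1/2 ≤ dist (f q) c₁ := le_of_not_gt fun h => hqball (mem_ball.2 h)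
  have hfpq : 1/4 < ‖f q - f p‖ := by
    have htri : dist (f q) c₁ ≤ dist (f q) (f p) + dist (f p) c₁ := dist_triangle _ _ _
    have he : dist (f q) (f p) = ‖f q - f p‖ := dist_eq_norm _ _
    linarith
  have hM_pos : 0 < M := by
    by_contra h
    push_neg at h
    have h1 := hMVT p hpS q hqS
    nlinarith [norm_nonneg (q - p)]
  have hD0 : (0:ℝ) < D := lt_of_lt_of_le one_pos hD
  set d : ℝ := 1/(4*M) with hd
  have hd_pos : 0 < d := by positivity
  have hdq : d < ‖q - p‖ := by
    have h1 := hMVT p hpS q hqS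
    rw [hd, div_lt_iff₀ (by positivity)]
    nlinarith [norm_nonneg (q - p)]
  have hqp2s : ‖q - p‖ < 2*s := by
    obtain ⟨hq1, hq2⟩ := hqS
    obtain ⟨hp1, hp2⟩ := hpS
    have h1 := hnorm_le (q - p)
    have e1 : (q - p).re = (q - w).re - (p - w).re := by simp only [Complex.sub_re]; ring
    have e2 : (q - p).im = (q - w).im - (p - w).im := by simp only [Complex.sub_im]; ring
    rcases abs_lt.1 hq1 with ⟨a1, a2⟩
    rcases abs_lt.1 hp1 with ⟨b1, b2⟩
    rcases abs_lt.1 hq2 with ⟨a3, a4⟩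
    rcases abs_lt.1 hp2 with ⟨b3, b4⟩
    have h2 : |(q - p).re| < s := by
      rw [e1, abs_lt]; constructor <;> linarith
    have h3 : |(q - p).im| < s := by
      rw [e2, abs_lt]; constructor <;> linarith
    linarith
  set lam : ℝ := 2*d/(5*s) with hlam
  have hlam_pos : 0 < lam := by positivity
  have hlam_lt1 : lam < 1 := by
    rw [hlam, div_lt_one (by positivity)]
    nlinarith
  set c := p + lam • (w - p) with hc
  set ρ : ℝ := d/5 with hρdef
  have hρ : 0 < ρ := by positivity
  have hlams : lam * (s/2) = ρ := by
    rw [hlam, hρdef]; field_simp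
  have hball_S : ball c ρ ⊆ openSquare w s := by
    intro y hy
    rw [mem_ball, dist_eq_norm] at hy
    have hcw : c - w = (1 - lam) • (p - w) := by rw [hc]; module
    obtain ⟨hp1, hp2⟩ := hpS
    have e : y - w = (y - c) + (c - w) := by ring
    refine ⟨?_, ?_⟩
    · have er : (y - w).re = (y - c).re + (c - w).re := by rw [e, Complex.add_re]
      have ecr : (c - w).re = (1 - lam) * (p - w).re := by
        rw [hcw, Complex.smul_re, smul_eq_mul]
      have h3 : |(c - w).re| < (1 - lam) * (s/2) := by
        rw [ecr, abs_mul, abs_of_nonneg (by linarith : (0:ℝ) ≤ 1 - lam)]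
        exact mul_lt_mul_of_pos_left hp1 (by linarith)
      calc |(y - w).re| = |(y - c).re + (c - w).re| := by rw [er]
      _ ≤ |(y - c).re| + |(c - w).re| := abs_add_le _ _
      _ < ρ + (1 - lam) * (s/2) := add_lt_add (lt_of_le_of_lt (habs_re _) hy) h3
      _ = s/2 := by rw [← hlams]; ring
    · have er : (y - w).im = (y - c).im + (c - w).im := by rw [e, Complex.add_im]
      have ecr : (c - w).im = (1 - lam) * (p - w).im := by
        rw [hcw, Complex.smul_im, smul_eq_mul]
      have h3 : |(c - w).im| < (1 - lam) * (s/2) := by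
        rw [ecr, abs_mul, abs_of_nonneg (by linarith : (0:ℝ) ≤ 1 - lam)]
        exact mul_lt_mul_of_pos_left hp2 (by linarith)
      calc |(y - w).im| = |(y - c).im + (c - w).im| := by rw [er]
      _ ≤ |(y - c).im| + |(c - w).im| := abs_add_le _ _
      _ < ρ + (1 - lam) * (s/2) := add_lt_add (lt_of_le_of_lt (habs_im _) hy) h3
      _ = s/2 := by rw [← hlams]; ring
  have hclball : closedBall c ρ ⊆ U := by
    rw [← closure_ball c hρ.ne']
    exact (closure_mono hball_S).trans hSU
  have hcb : closedBall c ρ ⊆ closure (openSquare w s) := by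
    rw [← closure_ball c hρ.ne']
    exact closure_mono hball_S
  have hcS : c ∈ openSquare w s := hball_S (mem_ball_self hρ)
  set bb := M/D with hbb
  have hb_pos : 0 < bb := div_pos hM_pos hD0
  have hlow : ∀ z ∈ closedBall c ρ, bb ≤ ‖deriv f z‖ := by
    intro z hz
    have h := hdist zM hzM z (hcb hz)
    rw [hbb, div_le_iff₀ hD0]
    calc M ≤ D * ‖deriv f z‖ := h
    _ = ‖deriv f z‖ * D := mul_comm _ _
  have hkey := key_ball hU hf hinj hρ hclball hb_pos hlow
  have hsmall : 1/(40*D^2) ≤ bb * ρ := by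
    have hbρ : bb * ρ = 1/(20*D) := by
      rw [hbb, hρdef, hd]
      field_simp
      ring
    rw [hbρ, div_le_div_iff₀ (by positivity) (by positivity)]
    nlinarith
  refine ⟨f c, fun y hy => ⟨?_, ?_⟩⟩
  · rw [mem_ball] at hy ⊢
    have h2 : dist (f c) (f p) ≤ M * ‖c - p‖ := by
      rw [dist_eq_norm]; exact hMVT p hpS c hcS
    have hcp : ‖c - p‖ = lam * ‖w - p‖ := by
      have e : c - p = lam • (w - p) := by rw [hc]; module
      rw [e, norm_smul, Real.norm_eq_abs, abs_of_pos hlam_pos]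
    have hwp : ‖w - p‖ < s := by
      obtain ⟨hp1, hp2⟩ := hpS
      rw [norm_sub_rev]
      have h1 := hnorm_le (p - w)
      linarith
    have h3 : M * ‖c - p‖ ≤ 1/10 := by
      rw [hcp]
      have h4 : M * (lam * ‖w - p‖) ≤ M * (lam * s) := by
        apply mul_le_mul_of_nonneg_left _ hM_pos.le
        exact mul_le_mul_of_nonneg_left hwp.le hlam_pos.le
      have heq : M * (lam * s) = 1/10 := by
        rw [hlam, hd]; field_simp; ring
      linarith
    have htri1 : dist y c₁ ≤ dist y (f c) + dist (f c) (f p) + dist (f p) c₁ :=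
      dist_triangle4 y (f c) (f p) c₁
    have hyD : dist y (f c) < 1/40 := by
      have hD21 : (1:ℝ) ≤ D^2 := by nlinarith
      have h5 : 1/(40*D^2) ≤ 1/40 := by
        rw [div_le_div_iff₀ (by positivity) (by norm_num)]
        nlinarith
      linarith
    linarith
  · exact Set.image_mono hball_S (hkey (ball_subset_ball hsmall hy))

end
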